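/- Let q be a prime power, q − 1 = e·f with e > 1, and let C_0 be the subgroup of F_q^× of index e with −1 ∈ C_0, with cosets C_0, ..., C_{e−1}. For the cyclotomic association scheme with relations R_i = {(x,y) : x − y ∈ C_{i−1}} (1 ≤ i ≤ e), the intersection numbers satisfy, for each j ∈ {1,...,e}, Σ_{k=1}^{e} p_{k j}^{k} = f − 1, where p_{ij}^k = |{z ∈ F_q : x − z ∈ C_{i−1}, y − z ∈ C_{j−1}}| for any fixed (x,y) with x − y ∈ C_{k−1}. In particular the cyclotomic scheme is pseudocyclic. -/

import Mathlib

/-- Let `q` be a prime power, `q − 1 = e·f` with `e > 1`, and let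
`C ≤ F_qˣ` be the subgroup of index `e` with `−1 ∈ C`, with cosets
`Cset i = g^i · C` (0-based; `g` a generator of `F_qˣ`). For the cyclotomic
association scheme with relations `R_i = {(x,y) : x − y ∈ Cset (i−1)}`, all
nontrivial valencies equal `f`, and for each `j < e` the intersection numbers
satisfy `∑_{k<e} p_{k j}^{k} = f − 1`, where for any choice of `(x_k, y_k)` with
`x_k − y_k ∈ Cset k`, `p_{kj}^k = |{z : x_k − z ∈ Cset k ∧ y_k − z ∈ Cset j}|`.
In particular the cyclotomic scheme is pseudocyclic. -/
theorem cyclotomic_scheme_pseudocyclic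
    (q e f : ℕ) (hq : ∃ p n : ℕ, p.Prime ∧ 0 < n ∧ q = p ^ n)
    (he : 1 < e) (hef : q - 1 = e * f)
    (F : Type*) [Field F] [Fintype F] (hF : Fintype.card F = q)
    (g : Fˣ) (hg : ∀ x : Fˣ, x ∈ Subgroup.zpowers g)
    (C : Subgroup Fˣ) (hC : C.index = e) (hC1 : (-1 : Fˣ) ∈ C)
    (Cset : ℕ → Set F)
    (hCset : ∀ i, Cset i = {x : F | ∃ u ∈ C, x = (g : F) ^ i * (u : F)})
    (j : ℕ) (hj : j < e)
    (x y : ℕ → F) (hxy : ∀ k < e, x k - y k ∈ Cset k) :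
    (∀ k < e, (Cset k).ncard = f) ∧
    ∑ k ∈ Finset.range e,
        ({z : F | x k - z ∈ Cset k ∧ y k - z ∈ Cset j}).ncard = f - 1 := by
  classical
  have he0 : 0 < e := by omega
  haveI : NeZero e := ⟨he0.ne'⟩
  have hq2 : 2 ≤ q := by
    obtain ⟨p, n, hp, hn, rfl⟩ := hq
    calc 2 ≤ p := hp.two_le
    _ = p ^ 1 := (pow_one p).symm
    _ ≤ p ^ n := Nat.pow_le_pow_right hp.pos hn
  have hcardU : Nat.card Fˣ = e * f := by
    rw [Nat.card_eq_fintype_card, Fintype.card_units, hF, hef]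
  have hf0 : 0 < f := by
    rcases Nat.eq_zero_or_pos f with h | h
    · exfalso; rw [h, Nat.mul_zero] at hef; omega
    · exact h
  -- order of g in the quotient is e
  have hcardQ : Nat.card (Fˣ ⧸ C) = e := by
    rw [← hC]; exact (Subgroup.index_eq_card C).symm
  have hmkgen : ∀ z : Fˣ ⧸ C,
      z ∈ Subgroup.zpowers ((QuotientGroup.mk g : Fˣ ⧸ C)) := by
    intro z
    obtain ⟨w, rfl⟩ := QuotientGroup.mk_surjective z
    obtain ⟨m, hm⟩ := hg w
    have hm2 : g ^ m = w := hm
    exact ⟨m, by rw [← hm2]; rfl⟩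
  have horder : orderOf ((QuotientGroup.mk g : Fˣ ⧸ C)) = e := by
    rw [← Nat.card_zpowers, ← hcardQ]
    rw [(Subgroup.eq_top_iff' _).2 hmkgen]
    exact Subgroup.card_top
  have hmem : ∀ m : ℤ, g ^ m ∈ C ↔ (e : ℤ) ∣ m := by
    intro m
    rw [← QuotientGroup.eq_one_iff, QuotientGroup.mk_zpow, ← orderOf_dvd_iff_zpow_eq_one,
      horder]
  have hcardC : Nat.card C = f := by
    have h1 := Subgroup.card_mul_index C
    rw [hC, hcardU] at h1
    have h2 : Nat.card C * e = f * e := by rw [h1, mul_comm]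
    exact Nat.eq_of_mul_eq_mul_right he0 h2
  -- coercion arithmetic helper
  have hmul : ∀ a b : ℤ, ((g ^ (a + b) : Fˣ) : F) = ((g ^ a : Fˣ) : F) * ((g ^ b : Fˣ) : F) := by
    intro a b; rw [zpow_add]; rfl
  -- ZMod characterization of class membership
  have hdvd_iff : ∀ (m : ℤ) (i : ℕ), (e : ℤ) ∣ m - i ↔ ((m : ZMod e) = (i : ZMod e)) := by
    intro m i
    rw [← ZMod.intCast_zmod_eq_zero_iff_dvd, ← sub_eq_zero (b := ((i : ℕ) : ZMod e))]
    push_cast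
    rfl
  have hPC : ∀ (i : ℕ) (w : F), w ∈ Cset i ↔
      ∃ m : ℤ, w = ((g ^ m : Fˣ) : F) ∧ (m : ZMod e) = (i : ZMod e) := by
    intro i w
    rw [hCset]
    constructor
    · rintro ⟨u, hu, rfl⟩
      obtain ⟨mu, hmu'⟩ := hg u
      have hmu : g ^ mu = u := hmu'
      refine ⟨i + mu, ?_, ?_⟩
      · rw [hmul, hmu]
        push_cast [zpow_natCast]
        rfl
      · have : (e : ℤ) ∣ mu := (hmem mu).1 (by rwa [hmu])
        rw [← hdvd_iff]; simpa using this
    · rintro ⟨m, rfl, hmc⟩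
      have hdv : (e : ℤ) ∣ m - i := (hdvd_iff m i).2 hmc
      refine ⟨g ^ (m - i), (hmem _).2 hdv, ?_⟩
      have : ((g ^ ((i : ℤ) + (m - i)) : Fˣ) : F) = ((g ^ m : Fˣ) : F) := by ring_nf
      rw [hmul] at this
      rw [← this]
      push_cast [zpow_natCast]
      rfl
  have hne0 : ∀ {i : ℕ} {w : F}, w ∈ Cset i → w ≠ 0 := by
    intro i w hw
    obtain ⟨m, rfl, -⟩ := (hPC i w).1 hw
    exact Units.ne_zero _
  have hex : ∀ w : F, w ≠ 0 → ∃ m : ℤ, w = ((g ^ m : Fˣ) : F) := by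
    intro w hw
    obtain ⟨m, hm⟩ := hg (Units.mk0 w hw)
    have hm2 : g ^ m = Units.mk0 w hw := hm
    exact ⟨m, by rw [hm2]; rfl⟩
  have huniq : ∀ {a b : ℤ}, ((g ^ a : Fˣ) : F) = ((g ^ b : Fˣ) : F) →
      ((a : ZMod e) = (b : ZMod e)) := by
    intro a b hab
    have h1 : (g ^ a : Fˣ) = g ^ b := Units.ext hab
    have h2 : g ^ (a - b) ∈ C := by
      rw [zpow_sub, h1, mul_inv_cancel]; exact C.one_mem
    have := (hmem _).1 h2
    have h3 : (((a - b : ℤ)) : ZMod e) = 0 := (ZMod.intCast_zmod_eq_zero_iff_dvd _ _).2 this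
    push_cast at h3
    linear_combination h3
  -- valency
  have hval : ∀ k, (Cset k).ncard = f := by
    intro k
    have himg : Cset k = (fun u : F => (g : F) ^ k * u) '' ((↑) '' (C : Set Fˣ)) := by
      rw [hCset]
      ext w
      simp only [Set.mem_image, Set.mem_setOf_eq, SetLike.mem_coe]
      constructor
      · rintro ⟨u, hu, rfl⟩; exact ⟨u, ⟨u, hu, rfl⟩, rfl⟩
      · rintro ⟨-, ⟨u, hu, rfl⟩, rfl⟩; exact ⟨u, hu, rfl⟩
    rw [himg, Set.ncard_image_of_injective _
        (mul_right_injective₀ (pow_ne_zero k (Units.ne_zero g))),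
      Set.ncard_image_of_injective _ (fun _ _ => Units.ext), ← Nat.card_coe_set_eq]
    exact hcardC
  refine ⟨fun k _ => hval k, ?_⟩
  -- the T sets
  set T : ZMod e → Set F := fun c =>
    {v : F | v ∈ Cset 0 ∧ ∃ m : ℤ, v - 1 = ((g ^ m : Fˣ) : F) ∧ (m : ZMod e) = c} with hT
  -- per-k identification
  have hSk : ∀ k < e, ({z : F | x k - z ∈ Cset k ∧ y k - z ∈ Cset j}).ncard
      = (T ((j : ZMod e) - (k : ZMod e))).ncard := by
    intro k hk
    have hd := hxy k hk
    obtain ⟨md, hmd, hmdc⟩ := (hPC k _).1 hd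
    have hdne : x k - y k ≠ 0 := hmd ▸ Units.ne_zero _
    have hSimg : {z : F | x k - z ∈ Cset k ∧ y k - z ∈ Cset j}
        = (fun v : F => x k - (x k - y k) * v) '' (T ((j : ZMod e) - (k : ZMod e))) := by
      ext z
      simp only [Set.mem_image, Set.mem_setOf_eq, hT]
      constructor
      · rintro ⟨h1, h2⟩
        obtain ⟨m1, hm1, hc1⟩ := (hPC k _).1 h1
        obtain ⟨m2, hm2, hc2⟩ := (hPC j _).1 h2
        refine ⟨((g ^ (m1 - md) : Fˣ) : F), ⟨?_, ⟨m2 - md, ?_, ?_⟩⟩, ?_⟩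
        · exact (hPC 0 _).2 ⟨m1 - md, rfl, by push_cast; rw [hc1, hmdc]; ring⟩
        · -- v - 1 = g^(m2 - md)
          have key : (((g ^ (m1 - md) : Fˣ) : F) - 1) * (x k - y k)
              = ((g ^ (m2 - md) : Fˣ) : F) * (x k - y k) := by
            rw [hmd, sub_mul, one_mul, ← hmul, ← hmul]
            rw [sub_add_cancel, sub_add_cancel, ← hm1, ← hm2, ← hmd]
            ring
          exact mul_right_cancel₀ hdne key
        · push_cast; rw [hc2, hmdc]
        · -- z = x k - d * v
          have : (x k - y k) * ((g ^ (m1 - md) : Fˣ) : F) = x k - z := by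
            rw [hmd, ← hmul, add_sub_cancel, ← hm1]
          rw [this]; ring
      · rintro ⟨v, ⟨hv0, ⟨m2, hv2, hc2⟩⟩, rfl⟩
        obtain ⟨m1, hm1, hc1⟩ := (hPC 0 _).1 hv0
        constructor
        · have : x k - (x k - (x k - y k) * v) = (x k - y k) * v := by ring
          rw [this, hmd, hm1, ← hmul]
          exact (hPC k _).2 ⟨md + m1, rfl, by push_cast; rw [hmdc, hc1]; simp⟩
        · have : y k - (x k - (x k - y k) * v) = (x k - y k) * (v - 1) := by ring
          rw [this, hmd, hv2, ← hmul]
          refine (hPC j _).2 ⟨md + m2, rfl, ?_⟩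
          push_cast; rw [hmdc, hc2]; push_cast; ring
    rw [hSimg, Set.ncard_image_of_injective]
    intro a b hab
    simp only [sub_right_inj] at hab
    exact mul_left_cancel₀ hdne hab
  rw [Finset.sum_congr rfl (fun k hk => hSk k (Finset.mem_range.1 hk))]
  -- reindex over ZMod e
  have hreindex : ∑ k ∈ Finset.range e, (T ((j : ZMod e) - (k : ZMod e))).ncard
      = ∑ c : ZMod e, (T c).ncard := by
    refine Finset.sum_nbij' (i := fun k => (j : ZMod e) - (k : ZMod e))
      (j := fun c => ((j : ZMod e) - c).val) ?_ ?_ ?_ ?_ ?_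
    · intro a _; exact Finset.mem_univ _
    · intro c _; exact Finset.mem_range.2 (ZMod.val_lt _)
    · intro a ha
      show ((j : ZMod e) - ((j : ZMod e) - (a : ZMod e))).val = a
      rw [sub_sub_cancel, ZMod.val_cast_of_lt (Finset.mem_range.1 ha)]
    · intro c _
      show (j : ZMod e) - ((((j : ZMod e) - c).val : ℕ) : ZMod e) = c
      rw [ZMod.natCast_val, ZMod.cast_id, sub_sub_cancel]
    · intro a _; rfl
  rw [hreindex]
  -- disjoint union over classes
  have hTfin : ∀ c : ZMod e, (T c).Finite := fun c => Set.toFinite _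
  have hsum : ∑ c : ZMod e, (T c).ncard = (Cset 0 \ {1}).ncard := by
    have h1 : ∀ c : ZMod e, (T c).ncard = ((hTfin c).toFinset).card := fun c =>
      Set.ncard_eq_toFinset_card _ (hTfin c)
    rw [Finset.sum_congr rfl (fun c _ => h1 c)]
    rw [← Finset.card_biUnion]
    · congr 1
      have : (Cset 0 \ {1} : Set F).Finite := Set.toFinite _
      rw [show (Cset 0 \ {1} : Set F).ncard = this.toFinset.card from
        Set.ncard_eq_toFinset_card _ this]
      congr 1
      ext v
      simp only [Finset.mem_biUnion, Set.Finite.mem_toFinset, Finset.mem_univ, true_and,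
        Set.mem_diff, Set.mem_singleton_iff, hT, Set.mem_setOf_eq]
      constructor
      · rintro ⟨c, hv0, m, hvm, -⟩
        refine ⟨hv0, fun h1 => ?_⟩
        rw [h1, sub_self] at hvm
        exact Units.ne_zero _ hvm.symm
      · rintro ⟨hv0, hv1⟩
        have : v - 1 ≠ 0 := sub_ne_zero.2 hv1
        obtain ⟨m, hm⟩ := hex _ this
        exact ⟨(m : ZMod e), hv0, m, hm, rfl⟩
    · intro c _ c' _ hcc'
      rw [Function.onFun, Finset.disjoint_left]
      rintro v hv hv'
      simp only [Set.Finite.mem_toFinset, hT, Set.mem_setOf_eq] at hv hv'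
      obtain ⟨-, m, hm, hmc⟩ := hv
      obtain ⟨-, m', hm', hmc'⟩ := hv'
      exact hcc' (by rw [← hmc, ← hmc']; exact huniq (by rw [← hm, ← hm']))
  rw [hsum]
  have h1mem : (1 : F) ∈ Cset 0 := by
    rw [hCset]; exact ⟨1, C.one_mem, by simp⟩
  rw [Set.ncard_diff_singleton_of_mem h1mem, hval 0]
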